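/- Let p ∈ (0,∞), let (Ω, 𝒜, μ) be a finite measure space (with separable measure algebra), let φ : Ω → ℂ be measurable, and let Z be a set of measurable functions on Ω such that q(φ)·f ∈ L^p(μ) for every q ∈ Π(z), f ∈ Z, and such that {q(φ)·f : q ∈ Π(z), f ∈ Z} is dense in L^p(μ). Then the set G′ := {q(φ)·e^{-|φ|}·f : q ∈ Π(z), f ∈ Z} is a graph cyclic set for M_φ: the set {(g, φ·g) : g ∈ G′} is dense in the graph {(g, φ·g) : g ∈ L^p(μ), φ·g ∈ L^p(μ)} with respect to the product L^p topology. -/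

import Mathlib

open MeasureTheory Filter ENNReal Topology

/-- If `Z` is a cyclic set for `M_φ` in `L^p(μ)` on a finite separable measure space, then
`Z·e^{-|φ|}` is graph cyclic for `M_φ`: the pairs `(g, φ·g)` for
`g ∈ {q(φ)·e^{-|φ|}·f : q ∈ Π(z), f ∈ Z}` are dense in the graph of `M_φ`. -/
theorem stmt_14 (p : ℝ) (hp : 0 < p) {Ω : Type*} [MeasurableSpace Ω]
    [MeasurableSpace.CountablyGenerated Ω] (μ : Measure Ω) [IsFiniteMeasure μ]
    (φ : Ω → ℂ) (hφ : Measurable φ)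
    (Z : Set (Ω → ℂ)) (hZmeas : ∀ f ∈ Z, Measurable f)
    (hZLp : ∀ q : Polynomial ℂ, ∀ f ∈ Z,
      MemLp (fun ω => Polynomial.eval (φ ω) q * f ω) (ENNReal.ofReal p) μ)
    (hZdense : ∀ g : Ω → ℂ, MemLp g (ENNReal.ofReal p) μ → ∀ ε : ℝ, 0 < ε →
      ∃ q : Polynomial ℂ, ∃ f ∈ Z,
        eLpNorm (fun ω => Polynomial.eval (φ ω) q * f ω - g ω) (ENNReal.ofReal p) μ
          < ENNReal.ofReal ε) :
    ∀ g : Ω → ℂ, MemLp g (ENNReal.ofReal p) μ →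
      MemLp (fun ω => φ ω * g ω) (ENNReal.ofReal p) μ → ∀ ε : ℝ, 0 < ε →
      ∃ q : Polynomial ℂ, ∃ f ∈ Z,
        eLpNorm (fun ω => Polynomial.eval (φ ω) q * ((Real.exp (-‖φ ω‖) : ℝ) : ℂ) * f ω - g ω)
            (ENNReal.ofReal p) μ < ENNReal.ofReal ε ∧
        eLpNorm (fun ω =>
            φ ω * (Polynomial.eval (φ ω) q * ((Real.exp (-‖φ ω‖) : ℝ) : ℂ) * f ω) - φ ω * g ω)
            (ENNReal.ofReal p) μ < ENNReal.ofReal ε := by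
  intro g hg hφg ε hε
  set P := ENNReal.ofReal p with hP
  have hP0 : P ≠ 0 := (ENNReal.ofReal_pos.mpr hp).ne'
  have hPtop : P ≠ ∞ := ENNReal.ofReal_ne_top
  have hPr : P.toReal = p := ENNReal.toReal_ofReal hp.le
  set c := (LpAddConst P).toReal with hc
  have hc0 : (0:ℝ) ≤ c := ENNReal.toReal_nonneg
  have hCc : LpAddConst P = ENNReal.ofReal c := by
    rw [hc, ENNReal.ofReal_toReal (LpAddConst_lt_top P).ne]
  set η : ℝ := ε / (4 * (c + 1)) with hη
  have hη0 : 0 < η := by positivity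
  -- the truncation sets
  set s : ℕ → Set Ω := fun n => {ω | (n : ℝ) < ‖φ ω‖} with hs
  have hs_meas : ∀ n, MeasurableSet (s n) :=
    fun n => measurableSet_lt measurable_const hφ.norm
  set F : Ω → ℝ≥0∞ := fun ω => (‖g ω‖₊ : ℝ≥0∞) ^ p + (‖φ ω * g ω‖₊ : ℝ≥0∞) ^ p with hF
  set ν : Measure Ω := μ.withDensity F with hν
  have hν_apply : ∀ n, ν (s n) = ∫⁻ ω in s n, F ω ∂μ := fun n =>
    withDensity_apply F (hs_meas n)
  have hν_fin : ν (s 0) ≠ ∞ := by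
    have h1 : (∫⁻ ω, (‖g ω‖₊ : ℝ≥0∞) ^ p ∂μ) < ∞ := by
      have := lintegral_rpow_enorm_lt_top_of_eLpNorm_lt_top hP0 hPtop hg.eLpNorm_lt_top
      rwa [hPr] at this
    have h2 : (∫⁻ ω, (‖φ ω * g ω‖₊ : ℝ≥0∞) ^ p ∂μ) < ∞ := by
      have := lintegral_rpow_enorm_lt_top_of_eLpNorm_lt_top hP0 hPtop hφg.eLpNorm_lt_top
      rwa [hPr] at this
    have hle : ν (s 0) ≤ ∫⁻ ω, F ω ∂μ := by
      rw [hν_apply]; exact setLIntegral_le_lintegral _ _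
    refine (hle.trans_lt ?_).ne
    have hgm : AEMeasurable (fun ω => (‖g ω‖₊ : ℝ≥0∞) ^ p) μ :=
      ENNReal.continuous_rpow_const.measurable.comp_aemeasurable
        hg.aestronglyMeasurable.aemeasurable.nnnorm.coe_nnreal_ennreal
    calc (∫⁻ ω, F ω ∂μ)
        = (∫⁻ ω, (‖g ω‖₊ : ℝ≥0∞) ^ p ∂μ) + ∫⁻ ω, (‖φ ω * g ω‖₊ : ℝ≥0∞) ^ p ∂μ :=
          lintegral_add_left' hgm _
      _ < ∞ := ENNReal.add_lt_top.mpr ⟨h1, h2⟩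
  have h_inter : ⋂ n, s n = ∅ := by
    ext ω
    simp only [hs, Set.mem_iInter, Set.mem_setOf_eq, Set.mem_empty_iff_false, iff_false,
      not_forall, not_lt]
    obtain ⟨n, hn⟩ := exists_nat_ge ‖φ ω‖
    exact ⟨n, hn⟩
  have h_anti : Antitone s := by
    intro n m hnm ω hω
    simp only [hs, Set.mem_setOf_eq] at hω ⊢
    exact lt_of_le_of_lt (by exact_mod_cast hnm) hω
  have h_tendsto : Tendsto (ν ∘ s) atTop (𝓝 0) := by
    have := tendsto_measure_iInter_atTop (μ := ν)
      (fun n => (hs_meas n).nullMeasurableSet) h_anti ⟨0, hν_fin⟩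
    rwa [h_inter, measure_empty] at this
  have hpos : (0:ℝ≥0∞) < ENNReal.ofReal η ^ p :=
    ENNReal.rpow_pos (ENNReal.ofReal_pos.mpr hη0) ENNReal.ofReal_ne_top
  obtain ⟨N, hN⟩ := ((tendsto_order.1 h_tendsto).2 _ hpos).exists
  -- tail bound
  have tail_bound : ∀ v : Ω → ℂ, (∀ ω, (‖v ω‖₊ : ℝ≥0∞) ^ p ≤ F ω) →
      eLpNorm ((s N).indicator v) P μ ≤ ENNReal.ofReal η := by
    intro v hv
    rw [eLpNorm_eq_lintegral_rpow_enorm_toReal hP0 hPtop, hPr]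
    have h1 : (∫⁻ ω, (‖(s N).indicator v ω‖₊ : ℝ≥0∞) ^ p ∂μ)
        = ∫⁻ ω in s N, (‖v ω‖₊ : ℝ≥0∞) ^ p ∂μ := by
      rw [← lintegral_indicator (hs_meas N)]
      congr 1; funext ω
      by_cases hω : ω ∈ s N
      · simp [Set.indicator_of_mem hω]
      · simp [Set.indicator_of_notMem hω, ENNReal.zero_rpow_of_pos hp]
    have h2 : (∫⁻ ω in s N, (‖v ω‖₊ : ℝ≥0∞) ^ p ∂μ) ≤ ν (s N) := by
      rw [hν_apply]; exact lintegral_mono fun ω => hv ω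
    have h3 : (∫⁻ ω, (‖(s N).indicator v ω‖₊ : ℝ≥0∞) ^ p ∂μ) < ENNReal.ofReal η ^ p :=
      lt_of_le_of_lt (h1 ▸ h2) hN
    calc (∫⁻ ω, (‖(s N).indicator v ω‖₊ : ℝ≥0∞) ^ p ∂μ) ^ (1/p)
        ≤ (ENNReal.ofReal η ^ p) ^ (1/p) := ENNReal.rpow_le_rpow h3.le (by positivity)
      _ = ENNReal.ofReal η := by
          rw [← ENNReal.rpow_mul, mul_one_div_cancel hp.ne', ENNReal.rpow_one]
  -- the auxiliary function h
  set h : Ω → ℂ := (s N)ᶜ.indicator (fun ω => g ω * ((Real.exp ‖φ ω‖ : ℝ) : ℂ)) with hh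
  have h_aesm : AEStronglyMeasurable h μ :=
    (hg.aestronglyMeasurable.mul
      ((Complex.measurable_ofReal.comp hφ.norm.exp).aestronglyMeasurable)).indicator
      (hs_meas N).compl
  have h_mem : MemLp h P μ := by
    refine MemLp.of_le (hg.const_mul ((Real.exp N : ℝ) : ℂ)) h_aesm ?_
    filter_upwards with ω
    by_cases hω : ω ∈ (s N)ᶜ
    · rw [hh, Set.indicator_of_mem hω]
      have hle : ‖φ ω‖ ≤ (N : ℝ) := not_lt.mp hω
      simp only [norm_mul, Complex.norm_real, Real.norm_eq_abs, Real.abs_exp]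
      rw [mul_comm (Real.exp N)]
      exact mul_le_mul_of_nonneg_left (Real.exp_le_exp.mpr hle) (norm_nonneg _)
    · rw [hh, Set.indicator_of_notMem hω]
      simp [norm_nonneg]
  obtain ⟨q, f, hfZ, hu⟩ := hZdense h h_mem η hη0
  set u : Ω → ℂ := fun ω => Polynomial.eval (φ ω) q * f ω - h ω with hudef
  have hu_aesm : AEStronglyMeasurable u μ :=
    (((q.continuous.measurable.comp hφ).mul (hZmeas f hfZ)).aestronglyMeasurable).sub h_aesm
  -- the two pointwise decompositions
  have hexp : ∀ ω : Ω, ((Real.exp (-‖φ ω‖) : ℝ) : ℂ) * ((Real.exp ‖φ ω‖ : ℝ) : ℂ) = 1 := by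
    intro ω
    rw [← Complex.ofReal_mul, ← Real.exp_add]
    simp
  have hdecompA : (fun ω => Polynomial.eval (φ ω) q * ((Real.exp (-‖φ ω‖) : ℝ) : ℂ) * f ω - g ω)
      = (fun ω => ((Real.exp (-‖φ ω‖) : ℝ) : ℂ) * u ω)
        + fun ω => -((s N).indicator g ω) := by
    funext ω
    simp only [Pi.add_apply, hudef, hh]
    by_cases hω : ω ∈ s N
    · rw [Set.indicator_of_mem hω, Set.indicator_of_notMem (by simpa using hω)]
      ring
    · rw [Set.indicator_of_notMem hω, Set.indicator_of_mem (Set.mem_compl hω)]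
      have := hexp ω
      linear_combination g ω * this
  have hdecompB : (fun ω =>
        φ ω * (Polynomial.eval (φ ω) q * ((Real.exp (-‖φ ω‖) : ℝ) : ℂ) * f ω) - φ ω * g ω)
      = (fun ω => φ ω * ((Real.exp (-‖φ ω‖) : ℝ) : ℂ) * u ω)
        + fun ω => -((s N).indicator (fun ω => φ ω * g ω) ω) := by
    funext ω
    simp only [Pi.add_apply, hudef, hh]
    by_cases hω : ω ∈ s N
    · rw [Set.indicator_of_mem hω, Set.indicator_of_notMem (by simpa using hω)]
      ring
    · rw [Set.indicator_of_notMem hω, Set.indicator_of_mem (Set.mem_compl hω)]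
      have := hexp ω
      linear_combination φ ω * g ω * this
  -- norm bounds on the first summands
  have hA1 : eLpNorm (fun ω => ((Real.exp (-‖φ ω‖) : ℝ) : ℂ) * u ω) P μ
      ≤ ENNReal.ofReal η := by
    refine le_trans (eLpNorm_mono fun ω => ?_) hu.le
    rw [norm_mul, Complex.norm_real, Real.norm_eq_abs, Real.abs_exp]
    calc Real.exp (-‖φ ω‖) * ‖u ω‖ ≤ 1 * ‖u ω‖ := by
          apply mul_le_mul_of_nonneg_right _ (norm_nonneg _)
          exact Real.exp_le_one_iff.mpr (neg_nonpos.mpr (norm_nonneg _))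
      _ = ‖u ω‖ := one_mul _
  have hB1 : eLpNorm (fun ω => φ ω * ((Real.exp (-‖φ ω‖) : ℝ) : ℂ) * u ω) P μ
      ≤ ENNReal.ofReal η := by
    refine le_trans (eLpNorm_mono fun ω => ?_) hu.le
    rw [norm_mul, norm_mul, Complex.norm_real, Real.norm_eq_abs, Real.abs_exp]
    have hae : ‖φ ω‖ * Real.exp (-‖φ ω‖) ≤ 1 := by
      rw [Real.exp_neg]
      rw [mul_inv_le_iff₀ (Real.exp_pos _), one_mul]
      linarith [Real.add_one_le_exp ‖φ ω‖]
    calc ‖φ ω‖ * Real.exp (-‖φ ω‖) * ‖u ω‖ ≤ 1 * ‖u ω‖ :=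
          mul_le_mul_of_nonneg_right hae (norm_nonneg _)
      _ = ‖u ω‖ := one_mul _
  -- tail bounds
  have hA2 : eLpNorm ((s N).indicator g) P μ ≤ ENNReal.ofReal η :=
    tail_bound g fun ω => le_self_add
  have hB2 : eLpNorm ((s N).indicator (fun ω => φ ω * g ω)) P μ ≤ ENNReal.ofReal η :=
    tail_bound _ fun ω => le_add_self
  -- final arithmetic
  have hfinal : ENNReal.ofReal c * (ENNReal.ofReal η + ENNReal.ofReal η) < ENNReal.ofReal ε := by
    rw [← ENNReal.ofReal_add hη0.le hη0.le, ← ENNReal.ofReal_mul hc0]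
    rw [ENNReal.ofReal_lt_ofReal_iff hε]
    have hne : (4 : ℝ) * (c + 1) ≠ 0 := by positivity
    have hkey : η * (4 * (c + 1)) = ε := by
      rw [hη]; field_simp
    nlinarith [hη0, hc0]
  refine ⟨q, f, hfZ, ?_, ?_⟩
  · rw [hdecompA]
    calc eLpNorm ((fun ω => ((Real.exp (-‖φ ω‖) : ℝ) : ℂ) * u ω)
            + fun ω => -((s N).indicator g ω)) P μ
        ≤ LpAddConst P * (eLpNorm (fun ω => ((Real.exp (-‖φ ω‖) : ℝ) : ℂ) * u ω) P μ
            + eLpNorm (fun ω => -((s N).indicator g ω)) P μ) := by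
          refine eLpNorm_add_le' ((Complex.measurable_ofReal.comp
            ((hφ.norm.neg).exp)).aestronglyMeasurable.mul hu_aesm) ?_ P
          exact ((hg.aestronglyMeasurable.indicator (hs_meas N)).neg)
      _ ≤ ENNReal.ofReal c * (ENNReal.ofReal η + ENNReal.ofReal η) := by
          rw [hCc] at *
          have he : eLpNorm (fun ω => -((s N).indicator g ω)) P μ
              = eLpNorm ((s N).indicator g) P μ := eLpNorm_neg _ _ _
          rw [he]
          gcongr
      _ < ENNReal.ofReal ε := hfinal
  · rw [hdecompB]
    calc eLpNorm ((fun ω => φ ω * ((Real.exp (-‖φ ω‖) : ℝ) : ℂ) * u ω)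
            + fun ω => -((s N).indicator (fun ω => φ ω * g ω) ω)) P μ
        ≤ LpAddConst P * (eLpNorm (fun ω => φ ω * ((Real.exp (-‖φ ω‖) : ℝ) : ℂ) * u ω) P μ
            + eLpNorm (fun ω => -((s N).indicator (fun ω => φ ω * g ω) ω)) P μ) := by
          refine eLpNorm_add_le' ((hφ.mul (Complex.measurable_ofReal.comp
            ((hφ.norm.neg).exp))).aestronglyMeasurable.mul hu_aesm) ?_ P
          exact ((hφg.aestronglyMeasurable.indicator (hs_meas N)).neg)
      _ ≤ ENNReal.ofReal c * (ENNReal.ofReal η + ENNReal.ofReal η) := by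
          rw [hCc] at *
          have he : eLpNorm (fun ω => -((s N).indicator (fun ω => φ ω * g ω) ω)) P μ
              = eLpNorm ((s N).indicator (fun ω => φ ω * g ω)) P μ := eLpNorm_neg _ _ _
          rw [he]
          gcongr
      _ < ENNReal.ofReal ε := hfinal
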